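/- ∑_{k=1}^n (n+1)(n+1+k)/((n+2-k)(n+3-k)) = (n+1)(n − H_n) + n, where H_n is the n-th harmonic number. -/
import Mathlib

open Finset

lemma rev_sum (n : ℕ) (f : ℕ → ℚ) :
    ∑ k ∈ Icc 1 n, f (n + 1 - k) = ∑ k ∈ Icc 1 n, f k := by
  apply Finset.sum_nbij' (i := fun k => n + 1 - k) (j := fun k => n + 1 - k) <;>
    intro a ha <;> simp [Finset.mem_Icc] at * <;> omega

lemma harm1 (n : ℕ) :
    ∑ k ∈ Icc 1 n, (1 : ℚ) / ((k : ℚ) + 1) =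
      (∑ j ∈ Icc 1 n, (1 : ℚ) / (j : ℚ)) + 1 / ((n : ℚ) + 1) - 1 := by
  induction n with
  | zero => simp
  | succ m ih =>
    rw [Finset.sum_Icc_succ_top (by omega), Finset.sum_Icc_succ_top (by omega), ih]
    have h1 : ((m : ℚ) + 1) ≠ 0 := by positivity
    have h2 : ((m : ℚ) + 2) ≠ 0 := by positivity
    push_cast
    field_simp
    ring

lemma harm2 (n : ℕ) :
    ∑ k ∈ Icc 1 n, (1 : ℚ) / ((k : ℚ) + 2) =
      (∑ j ∈ Icc 1 n, (1 : ℚ) / (j : ℚ)) + 1 / ((n : ℚ) + 1) + 1 / ((n : ℚ) + 2)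
        - 3 / 2 := by
  induction n with
  | zero => norm_num
  | succ m ih =>
    rw [Finset.sum_Icc_succ_top (by omega), Finset.sum_Icc_succ_top (by omega), ih]
    have h1 : ((m : ℚ) + 1) ≠ 0 := by positivity
    have h2 : ((m : ℚ) + 2) ≠ 0 := by positivity
    have h3 : ((m : ℚ) + 3) ≠ 0 := by positivity
    push_cast
    field_simp
    ring

theorem expected_sum_of_squared_ranks (n : ℕ) (hn : 1 ≤ n) :
    (∑ k ∈ Finset.Icc 1 n,
        ((n : ℚ) + 1) * ((n : ℚ) + 1 + (k : ℚ)) /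
          (((n : ℚ) + 2 - (k : ℚ)) * ((n : ℚ) + 3 - (k : ℚ)))) =
      ((n : ℚ) + 1) * ((n : ℚ) - ∑ j ∈ Finset.Icc 1 n, (1 : ℚ) / (j : ℚ)) + (n : ℚ) := by
  have key : ∀ k ∈ Icc 1 n,
      ((n : ℚ) + 1) * ((n : ℚ) + 1 + (k : ℚ)) /
          (((n : ℚ) + 2 - (k : ℚ)) * ((n : ℚ) + 3 - (k : ℚ))) =
        ((n : ℚ) + 1) * (2 * n + 3) * (1 / (((n + 1 - k : ℕ) : ℚ) + 1))
          - ((n : ℚ) + 1) * (2 * n + 4) * (1 / (((n + 1 - k : ℕ) : ℚ) + 2)) := by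
    intro k hk
    rw [Finset.mem_Icc] at hk
    have hc : ((n + 1 - k : ℕ) : ℚ) = (n : ℚ) + 1 - k := by
      have : (k : ℚ) ≤ (n : ℚ) + 1 := by exact_mod_cast le_trans hk.2 (by omega)
      push_cast [Nat.cast_sub (by omega : k ≤ n + 1)]
      ring
    rw [hc]
    have hd1 : (n : ℚ) + 2 - k ≠ 0 := by
      have : (k : ℚ) ≤ n := by exact_mod_cast hk.2
      intro h; nlinarith
    have hd2 : (n : ℚ) + 3 - k ≠ 0 := by
      have : (k : ℚ) ≤ n := by exact_mod_cast hk.2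
      intro h; nlinarith
    have e1 : (n : ℚ) + 1 - k + 1 = (n : ℚ) + 2 - k := by ring
    have e2 : (n : ℚ) + 1 - k + 2 = (n : ℚ) + 3 - k := by ring
    rw [e1, e2]
    field_simp
    ring
  rw [Finset.sum_congr rfl key, Finset.sum_sub_distrib, ← Finset.mul_sum, ← Finset.mul_sum]
  rw [rev_sum n (fun j => 1 / ((j : ℚ) + 1)), rev_sum n (fun j => 1 / ((j : ℚ) + 2))]
  rw [harm1, harm2]
  have h1 : ((n : ℚ) + 1) ≠ 0 := by positivity
  have h2 : ((n : ℚ) + 2) ≠ 0 := by positivity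
  field_simp
  ring
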